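/- Let ψ : S² → ℝ be continuous and strictly positive and let σ be the round surface measure on S², normalized barycenter map B(Φ) := (∫_{S²} Φ(p) ψ(p) dσ(p)) / (∫_{S²} ψ dσ). Define 𝓕 on the closed unit ball K(0,1) ⊂ ℝ³ by: 𝓕(N) = B(F_{N/‖N‖, 1−‖N‖}) for 0 < ‖N‖ < 1; 𝓕(0) = B(id); and 𝓕(N) = N for ‖N‖ = 1. Then 𝓕 is continuous on K(0,1), maps K(0,1) into K(0,1), and restricts to the identity on the boundary sphere ‖N‖ = 1. -/

import Mathlib

/-!
STATEMENT 9: With ψ : S² → ℝ continuous and strictly positive, σ the round surface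
measure, and the normalized barycenter map
`B(Φ) := (∫_{S²} Φ(p) ψ(p) dσ(p)) / (∫_{S²} ψ dσ)`, define 𝓕 on the closed unit
ball K(0,1) ⊂ ℝ³ by `𝓕(N) = B(F_{N/‖N‖, 1−‖N‖})` for 0 < ‖N‖ < 1, `𝓕(0) = B(id)`,
and `𝓕(N) = N` for ‖N‖ = 1.  Then 𝓕 is continuous on K(0,1), maps K(0,1) into
K(0,1), and restricts to the identity on the boundary sphere.
-/

noncomputable section
open scoped Classical

open Metric MeasureTheory
open scoped RealInnerProductSpace
open scoped Pointwise

/-- ℝ³ with the Euclidean norm. -/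
abbrev E3 : Type := EuclideanSpace ℝ (Fin 3)

/-- Constructor for points of ℝ³. -/
def mk3 (a b c : ℝ) : E3 := (WithLp.equiv 2 (Fin 3 → ℝ)).symm ![a, b, c]

/-- The north pole `e₃ = (0,0,1)`. -/
def e3 : E3 := mk3 0 0 1

/-- The proper conformal transformation `F_{n,τ}` of the sphere with north pole `n`:
this closed formula equals `R⁻¹ ∘ G_τ ∘ R` for any rotation `R ∈ SO(3)` with
`R n = e₃` (independently of the choice of `R`). -/
def Fmap (n : E3) (τ : ℝ) (p : E3) : E3 :=
  ((1 + ⟪p, n⟫) + τ ^ 2 * (1 - ⟪p, n⟫))⁻¹ •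
    ((2 * τ) • (p - ⟪p, n⟫ • n) + ((1 + ⟪p, n⟫) - τ ^ 2 * (1 - ⟪p, n⟫)) • n)

/-- The round surface measure on the unit sphere S² ⊂ ℝ³ (total mass 4π). -/
def sphMeasure : Measure (sphere (0 : E3) 1) :=
  (volume : Measure E3).toSphere

/-- The normalized barycenter `B(Φ)` of the measure ψ·σ pushed forward by Φ. -/
def bary (ψ : sphere (0 : E3) 1 → ℝ) (Φ : E3 → E3) : E3 :=
  (∫ p : sphere (0 : E3) 1, ψ p ∂sphMeasure)⁻¹ •
    ∫ p : sphere (0 : E3) 1, ψ p • Φ (p : E3) ∂sphMeasure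

/-- The map 𝓕 on the closed unit ball. -/
def Fcal (ψ : sphere (0 : E3) 1 → ℝ) (N : E3) : E3 :=
  if ‖N‖ = 1 then N
  else if N = 0 then bary ψ id
  else bary ψ (Fmap (‖N‖⁻¹ • N) (1 - ‖N‖))

/-- Unified formula for the conformal map, jointly nice in `N`. -/
def Gmap (N p : E3) : E3 :=
  (2 - (2 - ‖N‖) * (‖N‖ - ⟪p, N⟫))⁻¹ •
    ((2 * (1 - ‖N‖)) • p + (2 - ‖N‖ + ⟪p, N⟫) • N)

lemma gden_pos {N p : E3} (hN : ‖N‖ < 1) (hp : ‖p‖ = 1) :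
    0 < 2 - (2 - ‖N‖) * (‖N‖ - ⟪p, N⟫) := by
  have hs : |⟪p, N⟫| ≤ ‖N‖ := by
    have := abs_real_inner_le_norm p N
    rwa [hp, one_mul] at this
  have h1 := abs_le.mp hs
  have h0 : (0:ℝ) ≤ ‖N‖ := norm_nonneg N
  nlinarith [h1.1, h1.2]

lemma gmap_zero (p : E3) : Gmap 0 p = p := by
  simp [Gmap, smul_smul]

lemma gnorm_sq {N p : E3} (hp : ‖p‖ = 1) :
    ‖(2 * (1 - ‖N‖)) • p + (2 - ‖N‖ + ⟪p, N⟫) • N‖ ^ 2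
      = (2 - (2 - ‖N‖) * (‖N‖ - ⟪p, N⟫)) ^ 2 := by
  set a := 2 * (1 - ‖N‖)
  set b := 2 - ‖N‖ + ⟪p, N⟫
  have hpp : ⟪p, p⟫ = 1 := by rw [real_inner_self_eq_norm_sq, hp]; norm_num
  have hNN : ⟪N, N⟫ = ‖N‖ ^ 2 := real_inner_self_eq_norm_sq N
  have hexp : ‖a • p + b • N‖ ^ 2 = a^2 * 1 + 2 * (a * b * ⟪p, N⟫) + b^2 * ‖N‖^2 := by
    rw [← real_inner_self_eq_norm_sq]
    simp only [inner_add_add_self, real_inner_smul_left, real_inner_smul_right, hpp, hNN,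
      real_inner_comm N p]
    ring
  rw [hexp]
  simp only [a, b]
  ring

lemma gnorm_eq_one {N p : E3} (hN : ‖N‖ < 1) (hp : ‖p‖ = 1) : ‖Gmap N p‖ = 1 := by
  have hd := gden_pos hN hp
  set d := 2 - (2 - ‖N‖) * (‖N‖ - ⟪p, N⟫) with hdd
  set v := (2 * (1 - ‖N‖)) • p + (2 - ‖N‖ + ⟪p, N⟫) • N with hvv
  have h2 : ‖v‖ ^ 2 = d ^ 2 := gnorm_sq hp
  have hv : ‖v‖ = d := by
    nlinarith [norm_nonneg v]
  rw [Gmap, norm_smul, ← hdd, ← hvv, hv, norm_inv, Real.norm_eq_abs, abs_of_pos hd,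
    inv_mul_cancel₀ hd.ne']

lemma inner_eq_neg_one {N p : E3} (hN : ‖N‖ = 1) (hp : ‖p‖ = 1) (h : ⟪p, N⟫ = -1) :
    p = -N := by
  have : ‖p + N‖ ^ 2 = 0 := by
    rw [← real_inner_self_eq_norm_sq, inner_add_add_self, real_inner_comm p N] ; rw [h,
      real_inner_self_eq_norm_sq, real_inner_self_eq_norm_sq, hN, hp]
    ring
  have := pow_eq_zero_iff (n := 2) (by norm_num) |>.mp this
  have : p + N = 0 := norm_eq_zero.mp this
  linear_combination (norm := module) this

lemma gmap_boundary {N p : E3} (hN : ‖N‖ = 1) (hp : ‖p‖ = 1) (h : p ≠ -N) :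
    Gmap N p = N := by
  have hs : ⟪p, N⟫ ≠ -1 := fun hc => h (inner_eq_neg_one hN hp hc)
  have hd : 2 - (2 - ‖N‖) * (‖N‖ - ⟪p, N⟫) = 1 + ⟪p, N⟫ := by rw [hN]; ring
  have hd0 : (1 + ⟪p, N⟫) ≠ 0 := by
    intro hc; apply hs; linarith [hc]
  rw [Gmap, hd, hN]
  have h20 : (2:ℝ) * (1 - 1) = 0 := by norm_num
  rw [h20, zero_smul, zero_add, smul_smul,
    show 2 - 1 + ⟪p, N⟫ = 1 + ⟪p, N⟫ by ring, inv_mul_cancel₀ hd0, one_smul]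

lemma gmap_le_one {N p : E3} (hN : ‖N‖ ≤ 1) (hp : ‖p‖ = 1) : ‖Gmap N p‖ ≤ 1 := by
  rcases lt_or_eq_of_le hN with h | h
  · exact (gnorm_eq_one h hp).le
  · by_cases hpN : p = -N
    · have hd : 2 - (2 - ‖N‖) * (‖N‖ - ⟪p, N⟫) = 0 := by
        have hin : ⟪p, N⟫ = -1 := by
          rw [hpN, inner_neg_left, real_inner_self_eq_norm_sq, h]; norm_num
        rw [hin, h]; ring
      rw [Gmap, hd]
      simp
    · rw [gmap_boundary h hp hpN, h]

lemma fmap_eq_gmap {N p : E3} (h0 : 0 < ‖N‖) (h1 : ‖N‖ < 1) (hp : ‖p‖ = 1) :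
    Fmap (‖N‖⁻¹ • N) (1 - ‖N‖) p = Gmap N p := by
  have hr : ‖N‖ ≠ 0 := h0.ne'
  have hd0 : 0 < 2 - (2 - ‖N‖) * (‖N‖ - ⟪p, N⟫) := gden_pos h1 hp
  rw [Fmap, Gmap, real_inner_smul_right p N ‖N‖⁻¹]
  generalize hs : ⟪p, N⟫ = s at hd0 ⊢
  generalize hrr : ‖N‖ = r at hr hd0 ⊢
  have hd : 2 - (2 - r) * (r - s) ≠ 0 := hd0.ne'
  have he : (1 + r⁻¹ * s) + (1 - r) ^ 2 * (1 - r⁻¹ * s)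
      = 2 - (2 - r) * (r - s) := by
    field_simp
    ring
  rw [he]
  match_scalars
  · field_simp
  · field_simp
    ring

lemma span_ne_top (v : E3) : Submodule.span ℝ {v} ≠ ⊤ := by
  intro h
  have h3 : Module.finrank ℝ E3 = 3 := finrank_euclideanSpace_fin
  have hle : Module.finrank ℝ (Submodule.span ℝ ({v} : Set E3)) ≤ 1 := by
    simpa using finrank_span_le_card ({v} : Set E3)
  rw [h, finrank_top, h3] at hle
  norm_num at hle

lemma sphMeasure_singleton (x : sphere (0 : E3) 1) : sphMeasure {x} = 0 := by
  rw [sphMeasure, Measure.toSphere_apply' volume (measurableSet_singleton x)]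
  have hsub : Set.Ioo (0:ℝ) 1 • (Subtype.val '' ({x} : Set (sphere (0:E3) 1)))
      ⊆ ((Submodule.span ℝ {(x : E3)} : Submodule ℝ E3) : Set E3) := by
    rw [Set.image_singleton]
    intro y hy
    rcases Set.mem_smul.mp hy with ⟨t, z, ht, hz, rfl⟩
    rcases Set.mem_singleton_iff.mp hz with rfl
    exact Submodule.smul_mem _ t (Submodule.mem_span_singleton_self _)
  have h0 : volume (Set.Ioo (0:ℝ) 1 • (Subtype.val '' ({x} : Set (sphere (0:E3) 1)))) = 0 :=
    measure_mono_null hsub (Measure.addHaar_submodule volume _ (span_ne_top _))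
  rw [h0, mul_zero]

lemma sphMeasure_univ_pos : 0 < sphMeasure Set.univ := by
  rw [sphMeasure, Measure.toSphere_apply_univ]
  have h3 : Module.finrank ℝ E3 = 3 := finrank_euclideanSpace_fin
  rw [h3]
  exact ENNReal.mul_pos (by norm_num) (measure_ball_pos (volume : Measure E3) 0 one_pos).ne'

def Hmap (ψ : sphere (0 : E3) 1 → ℝ) (N : E3) : E3 :=
  (∫ p : sphere (0 : E3) 1, ψ p ∂sphMeasure)⁻¹ •
    ∫ p : sphere (0 : E3) 1, ψ p • Gmap N (p : E3) ∂sphMeasure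

instance : IsFiniteMeasure sphMeasure := by unfold sphMeasure; infer_instance

variable {ψ : sphere (0 : E3) 1 → ℝ}

lemma psi_integrable (hψc : Continuous ψ) : Integrable ψ sphMeasure :=
  hψc.integrable_of_hasCompactSupport (HasCompactSupport.of_compactSpace ψ)

lemma psi_integral_pos (hψc : Continuous ψ) (hψpos : ∀ p, 0 < ψ p) :
    0 < ∫ p, ψ p ∂sphMeasure := by
  rw [integral_pos_iff_support_of_nonneg (fun p => (hψpos p).le) (psi_integrable hψc)]
  have h : Function.support ψ = Set.univ := Set.eq_univ_of_forall (fun p => (hψpos p).ne')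
  rw [h]
  exact sphMeasure_univ_pos

lemma coe_sphere_norm (p : sphere (0 : E3) 1) : ‖(p : E3)‖ = 1 := by
  have := p.2
  rwa [mem_sphere_zero_iff_norm] at this

lemma gmap_aesm (hψc : Continuous ψ) (N : E3) :
    AEStronglyMeasurable (fun p : sphere (0:E3) 1 => ψ p • Gmap N (p:E3)) sphMeasure := by
  apply AEStronglyMeasurable.smul hψc.aestronglyMeasurable
  have hGm : Measurable (Gmap N) := by
    have hin : Continuous fun p : E3 => ⟪p, N⟫ := continuous_id.inner continuous_const
    have hd : Continuous fun p : E3 => 2 - (2 - ‖N‖) * (‖N‖ - ⟪p, N⟫) :=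
      continuous_const.sub (continuous_const.mul (continuous_const.sub hin))
    have hv : Continuous fun p : E3 =>
        (2 * (1 - ‖N‖)) • p + (2 - ‖N‖ + ⟪p, N⟫) • N :=
      (continuous_const.fun_smul continuous_id).add
        ((continuous_const.add hin).fun_smul continuous_const)
    exact (hd.measurable.inv).smul hv.measurable
  exact (hGm.comp continuous_subtype_val.measurable).aestronglyMeasurable

lemma gmap_bound (hψpos : ∀ p, 0 < ψ p) {N : E3} (hN : ‖N‖ ≤ 1)
    (p : sphere (0:E3) 1) : ‖ψ p • Gmap N (p:E3)‖ ≤ ‖ψ p‖ := by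
  rw [norm_smul]
  calc ‖ψ p‖ * ‖Gmap N (p:E3)‖ ≤ ‖ψ p‖ * 1 := by
        gcongr
        exact gmap_le_one hN (coe_sphere_norm p)
    _ = ‖ψ p‖ := mul_one _

lemma gmap_contAt {N₀ q : E3} (h : 2 - (2 - ‖N₀‖) * (‖N₀‖ - ⟪q, N₀⟫) ≠ 0) :
    ContinuousAt (fun N => Gmap N q) N₀ := by
  unfold Gmap
  have hin : Continuous fun N : E3 => ⟪q, N⟫ := continuous_const.inner continuous_id
  have hnr : Continuous fun N : E3 => ‖N‖ := continuous_norm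
  have hd : Continuous fun N : E3 => 2 - (2 - ‖N‖) * (‖N‖ - ⟪q, N⟫) :=
    continuous_const.sub ((continuous_const.sub hnr).mul (hnr.sub hin))
  have hv : Continuous fun N : E3 =>
      (2 * (1 - ‖N‖)) • q + (2 - ‖N‖ + ⟪q, N⟫) • N :=
    ((continuous_const.mul (continuous_const.sub hnr)).smul continuous_const).add
      (((continuous_const.sub hnr).add hin).smul continuous_id)
  exact (hd.continuousAt.inv₀ h).smul hv.continuousAt

lemma fcal_eq_hmap (hψc : Continuous ψ) (hψpos : ∀ p, 0 < ψ p) :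
    Set.EqOn (Fcal ψ) (Hmap ψ) (closedBall (0 : E3) 1) := by
  intro N hN
  rw [mem_closedBall_zero_iff] at hN
  rcases eq_or_lt_of_le hN with h1 | h1
  · -- boundary
    rw [Fcal, if_pos h1]
    have hx : (-N) ∈ sphere (0:E3) 1 := by
      rw [mem_sphere_zero_iff_norm, norm_neg, h1]
    have hae : (fun p : sphere (0:E3) 1 => ψ p • Gmap N (p:E3))
        =ᵐ[sphMeasure] fun p => ψ p • N := by
      have hnull := sphMeasure_singleton (⟨-N, hx⟩ : sphere (0:E3) 1)
      filter_upwards [compl_mem_ae_iff.mpr hnull] with p hp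
      have hne : (p : E3) ≠ -N := by
        intro hc
        exact hp (by ext; rw [hc])
      rw [gmap_boundary h1 (coe_sphere_norm p) hne]
    rw [Hmap, integral_congr_ae hae, integral_smul_const, smul_smul,
      inv_mul_cancel₀ (psi_integral_pos hψc hψpos).ne', one_smul]
  · by_cases h0 : N = 0
    · subst h0
      rw [Fcal, if_neg (by norm_num), if_pos rfl]
      simp only [Hmap, bary, gmap_zero, id_eq]
    · rw [Fcal, if_neg h1.ne, if_neg h0, bary, Hmap]
      congr 1
      refine integral_congr_ae (Filter.Eventually.of_forall fun p => ?_)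
      show ψ p • Fmap (‖N‖⁻¹ • N) (1 - ‖N‖) (p:E3) = ψ p • Gmap N (p:E3)
      rw [fmap_eq_gmap (norm_pos_iff.mpr h0) h1 (coe_sphere_norm p)]

lemma hmap_contOn (hψc : Continuous ψ) (hψpos : ∀ p, 0 < ψ p) :
    ContinuousOn (Hmap ψ) (closedBall (0 : E3) 1) := by
  unfold Hmap
  refine ContinuousOn.fun_const_smul ?_ _
  intro N₀ hN₀
  rw [mem_closedBall_zero_iff] at hN₀
  refine continuousWithinAt_of_dominated
    (Filter.Eventually.of_forall fun N => gmap_aesm hψc N) ?_ (psi_integrable hψc).norm ?_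
  · filter_upwards [self_mem_nhdsWithin] with N hNmem
    refine Filter.Eventually.of_forall fun p => ?_
    exact gmap_bound hψpos (mem_closedBall_zero_iff.mp hNmem) p
  · rcases eq_or_lt_of_le hN₀ with h1 | h1
    · -- boundary point
      have hx : (-N₀) ∈ sphere (0:E3) 1 := by
        rw [mem_sphere_zero_iff_norm, norm_neg, h1]
      have hnull := sphMeasure_singleton (⟨-N₀, hx⟩ : sphere (0:E3) 1)
      filter_upwards [compl_mem_ae_iff.mpr hnull] with p hp
      have hne : (p : E3) ≠ -N₀ := fun hc => hp (by ext; rw [hc])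
      have hd : 2 - (2 - ‖N₀‖) * (‖N₀‖ - ⟪(p:E3), N₀⟫) ≠ 0 := by
        rw [h1]
        intro hc
        have hs : ⟪(p:E3), N₀⟫ = -1 := by linarith [hc]
        exact hne (inner_eq_neg_one h1 (coe_sphere_norm p) hs)
      exact ((gmap_contAt hd).const_smul (ψ p)).continuousWithinAt
    · refine Filter.Eventually.of_forall fun p => ?_
      have hd : 2 - (2 - ‖N₀‖) * (‖N₀‖ - ⟪(p:E3), N₀⟫) ≠ 0 :=
        (gden_pos h1 (coe_sphere_norm p)).ne'
      exact ((gmap_contAt hd).const_smul (ψ p)).continuousWithinAt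


theorem stmt_9 (ψ : sphere (0 : E3) 1 → ℝ) (hψc : Continuous ψ)
    (hψpos : ∀ p, 0 < ψ p) :
    ContinuousOn (Fcal ψ) (closedBall (0 : E3) 1) ∧
    Set.MapsTo (Fcal ψ) (closedBall (0 : E3) 1) (closedBall (0 : E3) 1) ∧
    (∀ N : E3, ‖N‖ = 1 → Fcal ψ N = N) := by
  have hI := psi_integral_pos hψc hψpos
  refine ⟨(hmap_contOn hψc hψpos).congr (fcal_eq_hmap hψc hψpos), ?_, ?_⟩
  · intro N hN
    rw [mem_closedBall_zero_iff, fcal_eq_hmap hψc hψpos hN]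
    have hNle := mem_closedBall_zero_iff.mp hN
    have hInt : Integrable (fun p : sphere (0:E3) 1 => ψ p • Gmap N (p:E3)) sphMeasure :=
      (psi_integrable hψc).norm.mono' (gmap_aesm hψc N)
        (Filter.Eventually.of_forall fun p => gmap_bound hψpos hNle p)
    have hni : ∫ p : sphere (0:E3) 1, ‖ψ p‖ ∂sphMeasure = ∫ p, ψ p ∂sphMeasure :=
      integral_congr_ae (Filter.Eventually.of_forall fun p => abs_of_pos (hψpos p))
    calc ‖Hmap ψ N‖
        = (∫ p, ψ p ∂sphMeasure)⁻¹ * ‖∫ p : sphere (0:E3) 1, ψ p • Gmap N (p:E3) ∂sphMeasure‖ := by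
          rw [Hmap, norm_smul, norm_inv, Real.norm_eq_abs, abs_of_pos hI]
      _ ≤ (∫ p, ψ p ∂sphMeasure)⁻¹ * ∫ p : sphere (0:E3) 1, ‖ψ p • Gmap N (p:E3)‖ ∂sphMeasure := by
          gcongr
          exact norm_integral_le_integral_norm _
      _ ≤ (∫ p, ψ p ∂sphMeasure)⁻¹ * ∫ p : sphere (0:E3) 1, ‖ψ p‖ ∂sphMeasure := by
          exact mul_le_mul_of_nonneg_left (integral_mono hInt.norm (psi_integrable hψc).norm
            (fun p => gmap_bound hψpos hNle p)) (inv_nonneg.mpr hI.le)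
      _ = 1 := by rw [hni, inv_mul_cancel₀ hI.ne']
  · intro N h
    rw [Fcal, if_pos h]
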